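/- arXiv:2006.04174 — 3 statements merged into one kernel-verified Lean document; each statement's English description precedes it below -/
import Mathlib

section
/- Let V be a Hilbert space, V_n and W_m finite-dimensional subspaces with β(V_n,W_m) > 0, and ω ∈ W_m. Then the minimization problem min over u ∈ ω + W_m^⊥ of dist(u, V_n) is equivalent to the least-squares problem min over v ∈ V_n of ‖ω − P_{W_m} v‖; more precisely, for u = ω + η with η ∈ W_m^⊥, min_{η ∈ W_m^⊥} min_{v∈V_n} ‖ω + η − v‖² = min_{v∈V_n} ‖ω − P_{W_m} v‖². -/
open scoped RealInnerProductSpace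


/-- The PBDW minimization over the affine set `ω + Wₘ^⊥` is equivalent to the
least-squares problem `min_{v ∈ Vₙ} ‖ω − P_{Wₘ} v‖²`. -/
theorem pbdw_min_eq_least_squares
    {V : Type*} [NormedAddCommGroup V] [InnerProductSpace ℝ V] [CompleteSpace V]
    (Vn Wm : Submodule ℝ V) [FiniteDimensional ℝ Vn] [FiniteDimensional ℝ Wm]
    (hβ : 0 < ⨅ v : {v : Vn // (v : V) ≠ 0},
        ‖(Submodule.orthogonalProjectionOnto Wm (v : V) : V)‖ / ‖(v : V)‖)
    (ω : V) (hω : ω ∈ Wm) :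
    (⨅ η : Wmᗮ, ⨅ v : Vn, ‖ω + (η : V) - (v : V)‖ ^ 2)
      = ⨅ v : Vn, ‖ω - (Submodule.orthogonalProjectionOnto Wm (v : V) : V)‖ ^ 2 := by
  have hbdd : ∀ {ι : Type _} (f : ι → ℝ), (∀ i, 0 ≤ f i) → BddBelow (Set.range f) := by
    intro ι f hf
    exact ⟨0, by rintro x ⟨i, rfl⟩; exact hf i⟩
  -- Pythagoras decomposition
  have key : ∀ (η : Wmᗮ) (v : Vn),
      ‖ω + (η : V) - (v : V)‖ ^ 2
        = ‖ω - (Submodule.orthogonalProjectionOnto Wm (v : V) : V)‖ ^ 2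
          + ‖(η : V) - ((v : V) - (Submodule.orthogonalProjectionOnto Wm (v : V) : V))‖ ^ 2 := by
    intro η v
    have hdecomp : ω + (η : V) - (v : V)
        = (ω - (Submodule.orthogonalProjectionOnto Wm (v : V) : V))
          + ((η : V) - ((v : V) - (Submodule.orthogonalProjectionOnto Wm (v : V) : V))) := by
      abel
    rw [hdecomp]
    have ha : ω - (Submodule.orthogonalProjectionOnto Wm (v : V) : V) ∈ Wm :=
      Wm.sub_mem hω (Submodule.orthogonalProjectionOnto Wm (v : V)).2
    have hb : (η : V) - ((v : V) - (Submodule.orthogonalProjectionOnto Wm (v : V) : V)) ∈ Wmᗮ :=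
      Wmᗮ.sub_mem η.2 (Wm.sub_starProjection_mem_orthogonal (v : V))
    rw [norm_add_sq_real, Submodule.inner_right_of_mem_orthogonal ha hb]
    ring
  apply le_antisymm
  · apply le_ciInf
    intro v
    set η : Wmᗮ := ⟨(v : V) - (Submodule.orthogonalProjectionOnto Wm (v : V) : V),
      Wm.sub_starProjection_mem_orthogonal (v : V)⟩ with hη
    calc (⨅ η : Wmᗮ, ⨅ v : Vn, ‖ω + (η : V) - (v : V)‖ ^ 2)
        ≤ ⨅ v' : Vn, ‖ω + (η : V) - (v' : V)‖ ^ 2 :=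
          ciInf_le (hbdd (fun η' : Wmᗮ => ⨅ v' : Vn, ‖ω + (η' : V) - (v' : V)‖ ^ 2)
            (fun η' => le_ciInf (fun v' => by positivity))) η
      _ ≤ ‖ω + (η : V) - (v : V)‖ ^ 2 :=
          ciInf_le (hbdd (fun v' : Vn => ‖ω + (η : V) - (v' : V)‖ ^ 2)
            (fun v' => by positivity)) v
      _ = ‖ω - (Submodule.orthogonalProjectionOnto Wm (v : V) : V)‖ ^ 2 := by
          rw [key η v, hη]; simp
  · apply le_ciInf; intro η
    apply le_ciInf; intro v
    calc (⨅ v : Vn, ‖ω - (Submodule.orthogonalProjectionOnto Wm (v : V) : V)‖ ^ 2)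
        ≤ ‖ω - (Submodule.orthogonalProjectionOnto Wm (v : V) : V)‖ ^ 2 :=
          ciInf_le (hbdd (fun v' : Vn => ‖ω - (Submodule.orthogonalProjectionOnto Wm (v' : V) : V)‖ ^ 2)
            (fun v' => by positivity)) v
      _ ≤ ‖ω + (η : V) - (v : V)‖ ^ 2 := by
          rw [key η v]; exact le_add_of_nonneg_right (by positivity)
end

section
/- Let V be a Hilbert space, V_n and W_m finite-dimensional subspaces with β(V_n, W_m) > 0, and ω ∈ W_m. Define v* = (P_{V_n|W_m} P_{W_m|V_n})^{-1} P_{V_n|W_m}(ω) and u* = v* + ω − P_{W_m} v*. Then u* is the unique minimizer of dist(u, V_n) over the affine set u ∈ ω + W_m^⊥. -/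
open RealInnerProductSpace


/-- Explicit expression of the PBDW reconstruction: if `v*` solves the normal
equations `P_{Vₙ|Wₘ} P_{Wₘ|Vₙ} v* = P_{Vₙ|Wₘ} ω` then
`u* = v* + ω − P_{Wₘ} v*` is the unique minimizer of `dist(·, Vₙ)` over
the affine set `ω + Wₘ^⊥`. -/
theorem pbdw_explicit_unique_minimizer
    {V : Type*} [NormedAddCommGroup V] [InnerProductSpace ℝ V] [CompleteSpace V]
    (Vn Wm : Submodule ℝ V) [FiniteDimensional ℝ Vn] [FiniteDimensional ℝ Wm]
    (hβ : 0 < ⨅ v : {v : Vn // (v : V) ≠ 0},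
        ‖(Submodule.orthogonalProjectionOnto Wm (v : V) : V)‖ / ‖(v : V)‖)
    (ω : V) (hω : ω ∈ Wm)
    (vstar : Vn)
    (hvstar : Submodule.orthogonalProjectionOnto Vn ((Submodule.orthogonalProjectionOnto Wm ((vstar : V)) : V))
        = Submodule.orthogonalProjectionOnto Vn ω)
    (ustar : V)
    (hustar : ustar = (vstar : V) + ω - (Submodule.orthogonalProjectionOnto Wm (vstar : V) : V)) :
    (ustar - ω ∈ Wmᗮ) ∧
    (∀ u : V, u - ω ∈ Wmᗮ →
      ‖ustar - (Submodule.orthogonalProjectionOnto Vn ustar : V)‖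
        ≤ ‖u - (Submodule.orthogonalProjectionOnto Vn u : V)‖) ∧
    (∀ u : V, u - ω ∈ Wmᗮ →
      ‖u - (Submodule.orthogonalProjectionOnto Vn u : V)‖
        = ‖ustar - (Submodule.orthogonalProjectionOnto Vn ustar : V)‖ → u = ustar) := by
  set z : V := ω - (Submodule.orthogonalProjectionOnto Wm (vstar : V) : V) with hz
  have hzW : z ∈ Wm := Submodule.sub_mem _ hω (Submodule.orthogonalProjectionOnto Wm (vstar : V)).2
  have hzV : z ∈ Vnᗮ := by
    rw [← Submodule.orthogonalProjectionOnto_eq_zero_iff, hz, map_sub, hvstar, sub_self]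
  have hustar' : ustar = (vstar : V) + z := by rw [hustar, hz]; abel
  have hPustar : Submodule.orthogonalProjectionOnto Vn ustar = vstar := by
    rw [hustar', map_add, Submodule.orthogonalProjectionOnto_mem_subspace_eq_self,
      Submodule.orthogonalProjectionOnto_apply_of_mem_orthogonal hzV, add_zero]
  have hres : ustar - (Submodule.orthogonalProjectionOnto Vn ustar : V) = z := by
    rw [hPustar, hustar']; abel
  have hmem1 : ustar - ω ∈ Wmᗮ := by
    have h : ustar - ω = (vstar : V) - (Submodule.orthogonalProjectionOnto Wm (vstar : V) : V) := by
      rw [hustar]; abel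
    rw [h]
    exact Submodule.sub_starProjection_mem_orthogonal _
  -- key decomposition for a general admissible u
  have key : ∀ u : V, u - ω ∈ Wmᗮ →
      u - (Submodule.orthogonalProjectionOnto Vn u : V)
        = z + ((u - ustar) - (Submodule.orthogonalProjectionOnto Vn (u - ustar) : V)) ∧
      ⟪z, (u - ustar) - (Submodule.orthogonalProjectionOnto Vn (u - ustar) : V)⟫ = 0 := by
    intro u hu
    set d : V := u - ustar with hd
    have hdW : d ∈ Wmᗮ := by
      have h := Submodule.sub_mem Wmᗮ hu hmem1
      have h2 : u - ω - (ustar - ω) = d := by rw [hd]; abel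
      rwa [h2] at h
    constructor
    · have hPu : Submodule.orthogonalProjectionOnto Vn u = vstar + Submodule.orthogonalProjectionOnto Vn d := by
        have hue : u = ustar + d := by rw [hd]; abel
        rw [hue, map_add, hPustar]
      rw [hPu, Submodule.coe_add, hd, hustar']
      abel
    · have h1 : ⟪z, d⟫ = 0 := (Submodule.mem_orthogonal Wm d).mp hdW z hzW
      have h2 : ⟪z, ((Submodule.orthogonalProjectionOnto Vn d : V))⟫ = 0 :=
        (Submodule.mem_orthogonal' Vn z).mp hzV _ (Submodule.orthogonalProjectionOnto Vn d).2
      rw [inner_sub_right, h1, h2, sub_zero]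
  refine ⟨hmem1, ?_, ?_⟩
  · intro u hu
    obtain ⟨hdec, hinn⟩ := key u hu
    rw [hres, hdec]
    have hsq : ‖z + ((u - ustar) - (Submodule.orthogonalProjectionOnto Vn (u - ustar) : V))‖ ^ 2
        = ‖z‖ ^ 2 + ‖(u - ustar) - (Submodule.orthogonalProjectionOnto Vn (u - ustar) : V)‖ ^ 2 := by
      rw [norm_add_sq_real, hinn]; ring
    nlinarith [norm_nonneg z, norm_nonneg ((u - ustar) - (Submodule.orthogonalProjectionOnto Vn (u - ustar) : V)),
      norm_nonneg (z + ((u - ustar) - (Submodule.orthogonalProjectionOnto Vn (u - ustar) : V))),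
      sq_nonneg ‖(u - ustar) - (Submodule.orthogonalProjectionOnto Vn (u - ustar) : V)‖]
  · intro u hu heq
    obtain ⟨hdec, hinn⟩ := key u hu
    rw [hres] at heq
    rw [hdec] at heq
    set e : V := (u - ustar) - (Submodule.orthogonalProjectionOnto Vn (u - ustar) : V) with he
    have hsq : ‖z + e‖ ^ 2 = ‖z‖ ^ 2 + ‖e‖ ^ 2 := by
      rw [norm_add_sq_real, hinn]; ring
    have he0 : e = 0 := by
      have : ‖e‖ ^ 2 = 0 := by nlinarith [norm_nonneg (z + e), norm_nonneg z]
      have := pow_eq_zero_iff (n := 2) (by norm_num) |>.mp this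
      exact norm_eq_zero.mp this
    have hdVn : u - ustar ∈ Vn := by
      have : u - ustar = (Submodule.orthogonalProjectionOnto Vn (u - ustar) : V) := by
        have := sub_eq_zero.mp he0
        exact this
      rw [this]; exact (Submodule.orthogonalProjectionOnto Vn (u - ustar)).2
    have hdW : u - ustar ∈ Wmᗮ := by
      have h := Submodule.sub_mem Wmᗮ hu hmem1
      have h2 : u - ω - (ustar - ω) = u - ustar := by abel
      rwa [h2] at h
    by_contra hne
    have hd0 : u - ustar ≠ 0 := fun h => hne (sub_eq_zero.mp h)
    have hbdd : BddBelow (Set.range fun v : {v : Vn // (v : V) ≠ 0} =>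
        ‖(Submodule.orthogonalProjectionOnto Wm (v : V) : V)‖ / ‖(v : V)‖) := by
      refine ⟨0, ?_⟩
      rintro x ⟨v, rfl⟩
      positivity
    have hle := ciInf_le hbdd (⟨⟨u - ustar, hdVn⟩, hd0⟩ : {v : Vn // (v : V) ≠ 0})
    have hPzero : Submodule.orthogonalProjectionOnto Wm (u - ustar) = 0 :=
      Submodule.orthogonalProjectionOnto_apply_of_mem_orthogonal hdW
    simp only [hPzero] at hle
    rw [ZeroMemClass.coe_zero, norm_zero, zero_div] at hle
    linarith
end

section
/- Let V be a Hilbert space, ℓ : V → ℝ a bounded linear functional, V_n and W_m finite-dimensional subspaces with β(V_n, W_m) > 0, u ∈ V, and u* the PBDW reconstruction of u from ω = P_{W_m} u. Then |ℓ(u) − ℓ(u*)| ≤ ‖ℓ‖_{V'} · β(V_n, W_m)^{-1} · ‖u − P_{V_n} u‖. -/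
open RealInnerProductSpace

set_option maxHeartbeats 800000

private lemma quad_nonneg_imp_zero {a b : ℝ} (hb : 0 ≤ b)
    (h : ∀ t : ℝ, 0 ≤ 2 * t * a + t ^ 2 * b) : a = 0 := by
  have hb1 : (0:ℝ) < b + 1 := by linarith
  set s := a / (b + 1) with hs
  have ha : a = s * (b + 1) := by rw [hs, div_mul_cancel₀ _ hb1.ne']
  have h1 := h (-s)
  rw [ha] at h1
  have hs2 : s ^ 2 ≤ 0 := by nlinarith
  have hszero : s = 0 := by
    have h0 : s ^ 2 = 0 := le_antisymm hs2 (sq_nonneg s)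
    exact pow_eq_zero_iff (two_ne_zero) |>.mp h0
  rw [ha, hszero, zero_mul]



/-- Coarse error bound for a linear Quantity of Interest `ℓ` evaluated on the
PBDW reconstruction: `|ℓ(u) − ℓ(u*)| ≤ ‖ℓ‖ β⁻¹ ‖u − P_{Vₙ} u‖`. -/
theorem qoi_coarse_error_bound
    {V : Type*} [NormedAddCommGroup V] [InnerProductSpace ℝ V] [CompleteSpace V]
    (ℓ : V →L[ℝ] ℝ)
    (Vn Wm : Submodule ℝ V) [FiniteDimensional ℝ Vn] [FiniteDimensional ℝ Wm]
    (hβ : 0 < ⨅ v : {v : Vn // (v : V) ≠ 0},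
        ‖(Submodule.orthogonalProjectionOnto Wm (v : V) : V)‖ / ‖(v : V)‖)
    (u ustar : V)
    (hmem : ustar - (Submodule.orthogonalProjectionOnto Wm u : V) ∈ Wmᗮ)
    (hmin : ∀ u' : V, u' - (Submodule.orthogonalProjectionOnto Wm u : V) ∈ Wmᗮ →
      ‖ustar - (Submodule.orthogonalProjectionOnto Vn ustar : V)‖
        ≤ ‖u' - (Submodule.orthogonalProjectionOnto Vn u' : V)‖) :
    |ℓ u - ℓ ustar|
      ≤ ‖ℓ‖ * (⨅ v : {v : Vn // (v : V) ≠ 0},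
          ‖(Submodule.orthogonalProjectionOnto Wm (v : V) : V)‖ / ‖(v : V)‖)⁻¹
        * ‖u - (Submodule.orthogonalProjectionOnto Vn u : V)‖ := by
  set β := ⨅ v : {v : Vn // (v : V) ≠ 0},
      ‖(Submodule.orthogonalProjectionOnto Wm (v : V) : V)‖ / ‖(v : V)‖ with hβdef
  clear_value β
  -- the error
  set e := u - ustar with he
  -- e ∈ Wm⊥
  have heW : e ∈ Wmᗮ := by
    have h1 : u - (Submodule.orthogonalProjectionOnto Wm u : V) ∈ Wmᗮ :=
      Submodule.sub_starProjection_mem_orthogonal (K := Wm) u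
    have := Wmᗮ.sub_mem h1 hmem
    simpa [he, sub_sub_sub_cancel_right] using this
  -- residual of ustar lies in Wm
  set r := ustar - (Submodule.orthogonalProjectionOnto Vn ustar : V) with hr
  have hrV : r ∈ Vnᗮ := Submodule.sub_starProjection_mem_orthogonal (K := Vn) ustar
  have hrW : r ∈ Wm := by
    -- first-order optimality: ⟪r, δ⟫ = 0 for all δ ∈ Wm⊥
    have key : ∀ δ ∈ Wmᗮ, ⟪r, δ⟫ = 0 := by
      intro δ hδ
      have hortho : ⟪r, δ - (Submodule.orthogonalProjectionOnto Vn δ : V)⟫ = ⟪r, δ⟫ := by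
        have : ⟪r, (Submodule.orthogonalProjectionOnto Vn δ : V)⟫ = 0 :=
          (Submodule.mem_orthogonal' _ _).mp hrV _ (Submodule.orthogonalProjectionOnto Vn δ).2
        simp [inner_sub_right, this]
        exact this
      apply quad_nonneg_imp_zero (sq_nonneg ‖δ - (Submodule.orthogonalProjectionOnto Vn δ : V)‖)
      intro t
      have hmemt : (ustar + t • δ) - (Submodule.orthogonalProjectionOnto Wm u : V) ∈ Wmᗮ := by
        have := Wmᗮ.add_mem hmem (Wmᗮ.smul_mem t hδ)
        simpa [add_sub_right_comm] using this
      have h2 := hmin (ustar + t • δ) hmemt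
      have hexp : (ustar + t • δ) - (Submodule.orthogonalProjectionOnto Vn (ustar + t • δ) : V)
          = r + t • (δ - (Submodule.orthogonalProjectionOnto Vn δ : V)) := by
        simp only [map_add, map_smul, Submodule.coe_add, Submodule.coe_smul, hr, smul_sub]
        abel
      rw [hexp] at h2
      have h3 : ‖r‖ ^ 2 ≤ ‖r + t • (δ - (Submodule.orthogonalProjectionOnto Vn δ : V))‖ ^ 2 := by
        have := norm_nonneg r
        nlinarith
      rw [norm_add_sq_real] at h3
      rw [real_inner_smul_right, hortho] at h3
      rw [norm_smul, Real.norm_eq_abs] at h3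
      nlinarith [sq_abs t, h3]
    have : r ∈ Wmᗮᗮ := by
      rw [Submodule.mem_orthogonal]
      intro w hw
      rw [real_inner_comm]
      exact key w hw
    rwa [Submodule.orthogonal_orthogonal] at this
  -- ‖e - P_Vn e‖ ≤ ‖u - P_Vn u‖
  set a := e - (Submodule.orthogonalProjectionOnto Vn e : V) with hadef
  have haV : a ∈ Vnᗮ := Submodule.sub_starProjection_mem_orthogonal (K := Vn) e
  have haru : a = (u - (Submodule.orthogonalProjectionOnto Vn u : V)) - r := by
    simp only [hadef, he, hr, map_sub, Submodule.coe_sub]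
    abel
  have har : ⟪a, r⟫ = 0 := by
    have h1 : ⟪e, r⟫ = 0 := (Submodule.mem_orthogonal' _ _).mp heW _ hrW
    have h2 : ⟪(Submodule.orthogonalProjectionOnto Vn e : V), r⟫ = 0 :=
      (Submodule.mem_orthogonal _ _).mp hrV _ (Submodule.orthogonalProjectionOnto Vn e).2
    simp [hadef, inner_sub_left, h1, h2]
    exact h2
  have haleq : ‖a‖ ≤ ‖u - (Submodule.orthogonalProjectionOnto Vn u : V)‖ := by
    have h1 : ‖a‖ ^ 2 = ⟪a, u - (Submodule.orthogonalProjectionOnto Vn u : V)⟫ := by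
      have hx : u - (Submodule.orthogonalProjectionOnto Vn u : V) = a + r := by rw [haru]; abel
      rw [hx, inner_add_right, har, add_zero, real_inner_self_eq_norm_sq]
    have h2 : ⟪a, u - (Submodule.orthogonalProjectionOnto Vn u : V)⟫ ≤ ‖a‖ * ‖u - (Submodule.orthogonalProjectionOnto Vn u : V)‖ :=
      real_inner_le_norm _ _
    by_cases ha0 : ‖a‖ = 0
    · rw [ha0]; exact norm_nonneg _
    · have : 0 < ‖a‖ := lt_of_le_of_ne (norm_nonneg _) (Ne.symm ha0)
      nlinarith
  -- β ≤ 1 (there is a nonzero vector in Vn, else the infimum is 0)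
  have hne : Nonempty {v : Vn // (v : V) ≠ 0} := by
    by_contra hc
    rw [not_nonempty_iff] at hc
    rw [hβdef, Real.iInf_of_isEmpty] at hβ
    exact lt_irrefl 0 hβ
  have hbdd : BddBelow (Set.range fun v : {v : Vn // (v : V) ≠ 0} =>
      ‖(Submodule.orthogonalProjectionOnto Wm (v : V) : V)‖ / ‖(v : V)‖) := by
    refine ⟨0, fun x hx => ?_⟩
    obtain ⟨v, rfl⟩ := hx
    positivity
  have hβ1 : β ≤ 1 := by
    obtain ⟨v⟩ := hne
    have h1 : β ≤ ‖(Submodule.orthogonalProjectionOnto Wm (v : V) : V)‖ / ‖(v : V)‖ :=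
      hβdef ▸ ciInf_le hbdd v
    have h2 : ‖(Submodule.orthogonalProjectionOnto Wm ((v : Vn) : V) : V)‖ ≤ ‖((v : Vn) : V)‖ := by
      have h3 := (Submodule.orthogonalProjectionOnto Wm).le_opNorm ((v : Vn) : V)
      have h4 := Submodule.orthogonalProjectionOnto_norm_le Wm
      have h5 : ‖Submodule.orthogonalProjectionOnto Wm ((v : Vn) : V)‖
          = ‖(Submodule.orthogonalProjectionOnto Wm ((v : Vn) : V) : V)‖ := rfl
      rw [h5] at h3
      nlinarith [norm_nonneg ((v : Vn) : V)]
    have hv0 : (0:ℝ) < ‖((v : Vn) : V)‖ := norm_pos_iff.mpr v.2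
    calc β ≤ _ := h1
      _ ≤ 1 := by rw [div_le_one hv0]; exact h2
  -- key stability: β * ‖e‖ ≤ ‖a‖
  have hkey : β * ‖e‖ ≤ ‖a‖ := by
    set pe := Submodule.orthogonalProjectionOnto Vn e with hpe
    by_cases hv0 : ((pe : V)) = 0
    · have : a = e := by simp [hadef, hv0]
      rw [this]
      nlinarith [norm_nonneg e, hβ1, hβ.le]
    · -- v := pe ≠ 0
      have hβle : β ≤ ‖(Submodule.orthogonalProjectionOnto Wm (pe : V) : V)‖ / ‖(pe : V)‖ :=
        hβdef ▸ ciInf_le hbdd ⟨pe, hv0⟩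
      have hnv : (0:ℝ) < ‖(pe : V)‖ := norm_pos_iff.mpr hv0
      have hβv : β * ‖(pe : V)‖ ≤ ‖(Submodule.orthogonalProjectionOnto Wm (pe : V) : V)‖ :=
        (le_div_iff₀ hnv).mp hβle
      -- ⟪e, pe⟫ = ‖pe‖²
      have hev : ⟪e, (pe : V)⟫ = ‖(pe : V)‖ ^ 2 := by
        have h1 : ⟪e - (pe : V), (pe : V)⟫ = 0 :=
          (Submodule.mem_orthogonal' _ _).mp haV _ pe.2
        have : ⟪e, (pe : V)⟫ - ⟪(pe : V), (pe : V)⟫ = 0 := by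
          rw [← inner_sub_left]; exact h1
        rw [real_inner_self_eq_norm_sq] at this
        linarith
      -- ⟪e, P_Wm pe⟫ = 0
      have hePW : ⟪e, (Submodule.orthogonalProjectionOnto Wm (pe : V) : V)⟫ = 0 :=
        (Submodule.mem_orthogonal' _ _).mp heW _ (Submodule.orthogonalProjectionOnto Wm (pe : V)).2
      -- Cauchy–Schwarz step
      have hcs : ‖(pe : V)‖ ^ 2 ≤ ‖e‖ * ‖(pe : V) - (Submodule.orthogonalProjectionOnto Wm (pe : V) : V)‖ := by
        have h1 : ⟪e, (pe : V) - (Submodule.orthogonalProjectionOnto Wm (pe : V) : V)⟫ = ‖(pe : V)‖ ^ 2 := by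
          rw [inner_sub_right, hePW, sub_zero, hev]
        calc ‖(pe : V)‖ ^ 2 = _ := h1.symm
          _ ≤ _ := real_inner_le_norm _ _
      -- Pythagoras for pe
      have hpy : ‖(pe : V) - (Submodule.orthogonalProjectionOnto Wm (pe : V) : V)‖ ^ 2
          = ‖(pe : V)‖ ^ 2 - ‖(Submodule.orthogonalProjectionOnto Wm (pe : V) : V)‖ ^ 2 := by
        have h0 : ⟪(pe : V) - (Submodule.orthogonalProjectionOnto Wm (pe : V) : V),
            (Submodule.orthogonalProjectionOnto Wm (pe : V) : V)⟫ = 0 :=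
          (Submodule.mem_orthogonal' _ _).mp
            (Submodule.sub_starProjection_mem_orthogonal (K := Wm) (pe : V)) _
            (Submodule.orthogonalProjectionOnto Wm (pe : V)).2
        have := norm_add_sq_real ((pe : V) - (Submodule.orthogonalProjectionOnto Wm (pe : V) : V))
          (Submodule.orthogonalProjectionOnto Wm (pe : V) : V)
        simp only [sub_add_cancel, h0] at this
        linarith
      -- Pythagoras for e
      have hpye : ‖a‖ ^ 2 = ‖e‖ ^ 2 - ‖(pe : V)‖ ^ 2 := by
        have h0 : ⟪a, (pe : V)⟫ = 0 :=
          (Submodule.mem_orthogonal' _ _).mp haV _ pe.2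
        have := norm_add_sq_real a ((pe : V))
        have hae : a + (pe : V) = e := by simp [hadef, hpe]
        rw [hae, h0] at this
        linarith
      -- conclude: β² ‖e‖² ≤ ‖a‖²
      have hsq : β ^ 2 * ‖e‖ ^ 2 ≤ ‖a‖ ^ 2 := by
        have hne2 : ‖(pe : V)‖ ^ 2 ≤ (1 - β ^ 2) * ‖e‖ ^ 2 := by
          have hw : (0:ℝ) ≤ ‖(pe : V) - (Submodule.orthogonalProjectionOnto Wm (pe : V) : V)‖ :=
            norm_nonneg _
          have h1 : ‖(pe : V)‖ ^ 2 * ‖(pe : V)‖ ^ 2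
              ≤ (‖e‖ * ‖(pe : V) - (Submodule.orthogonalProjectionOnto Wm (pe : V) : V)‖)
                * (‖e‖ * ‖(pe : V) - (Submodule.orthogonalProjectionOnto Wm (pe : V) : V)‖) :=
            mul_self_le_mul_self (sq_nonneg _) hcs
          have h2 : (β * ‖(pe : V)‖) * (β * ‖(pe : V)‖)
              ≤ ‖(Submodule.orthogonalProjectionOnto Wm (pe : V) : V)‖
                * ‖(Submodule.orthogonalProjectionOnto Wm (pe : V) : V)‖ :=
            mul_self_le_mul_self (mul_nonneg hβ.le hnv.le) hβv
          nlinarith [h1, h2, hpy, hnv, sq_nonneg ‖e‖, mul_pos hnv hnv]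
        nlinarith
      have := norm_nonneg a
      nlinarith [mul_nonneg hβ.le (norm_nonneg e)]
  -- assemble
  have hebound : ‖e‖ ≤ β⁻¹ * ‖u - (Submodule.orthogonalProjectionOnto Vn u : V)‖ := by
    have h1 : β * ‖e‖ ≤ ‖u - (Submodule.orthogonalProjectionOnto Vn u : V)‖ := hkey.trans haleq
    have h2 := mul_le_mul_of_nonneg_left h1 (inv_nonneg.mpr hβ.le)
    rwa [← mul_assoc, inv_mul_cancel₀ hβ.ne', one_mul] at h2
  have hℓ : |ℓ u - ℓ ustar| ≤ ‖ℓ‖ * ‖e‖ := by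
    have : ℓ u - ℓ ustar = ℓ e := by rw [he, map_sub]
    rw [this, ← Real.norm_eq_abs]
    exact ℓ.le_opNorm e
  calc |ℓ u - ℓ ustar| ≤ ‖ℓ‖ * ‖e‖ := hℓ
    _ ≤ ‖ℓ‖ * (β⁻¹ * ‖u - (Submodule.orthogonalProjectionOnto Vn u : V)‖) :=
        mul_le_mul_of_nonneg_left hebound (norm_nonneg _)
    _ = _ := by ring
end
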